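/- Let Δ be a ψ-saturated set in DmbC for some formula ψ. Then for all formulas α, β: (1) α ∧ β ∈ Δ iff α ∈ Δ and β ∈ Δ; (2) α ∨ β ∈ Δ iff α ∈ Δ or β ∈ Δ; (3) α → β ∈ Δ iff α ∉ Δ or β ∈ Δ; (4) if ¬α ∉ Δ then α ∈ Δ; (5) if α ∈ Δ and ¬α ∈ Δ then ∘α ∉ Δ; (6) Oα ∈ Δ if and only if α ∈ Δ' for every Δ' ∈ W_can with Δ R_can Δ'. -/
import Mathlib


/-- Formulas over the signature Σ = {∧, ∨, →, ¬, ∘, O}, with countably many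
propositional variables. -/
inductive Form : Type
  | var : ℕ → Form
  | and : Form → Form → Form
  | or : Form → Form → Form
  | imp : Form → Form → Form
  | neg : Form → Form
  | circ : Form → Form
  | obl : Form → Form

namespace Form
/-- ⊥_α := (α ∧ ¬α) ∧ ∘α -/
def bot (α : Form) : Form := (α.and α.neg).and α.circ
end Form

/-- Theorems of the Hilbert calculus DmbC: CPL⁺ axioms, (EM), (bc), (O-K), (O-E),
with rules Modus Ponens and O-necessitation. -/
inductive ThmDmbC : Form → Prop
  | A1 (α β : Form) : ThmDmbC (α.imp (β.imp α))
  | A2 (α β γ : Form) : ThmDmbC ((α.imp (β.imp γ)).imp ((α.imp β).imp (α.imp γ)))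
  | A3 (α β : Form) : ThmDmbC (α.imp (β.imp (α.and β)))
  | A4 (α β : Form) : ThmDmbC ((α.and β).imp α)
  | A5 (α β : Form) : ThmDmbC ((α.and β).imp β)
  | A6 (α β : Form) : ThmDmbC (α.imp (α.or β))
  | A7 (α β : Form) : ThmDmbC (β.imp (α.or β))
  | A8 (α β γ : Form) : ThmDmbC ((α.imp γ).imp ((β.imp γ).imp ((α.or β).imp γ)))
  | A9 (α β : Form) : ThmDmbC (((α.imp β).imp α).imp α)
  | EM (α : Form) : ThmDmbC (α.or α.neg)
  | bc (α β : Form) : ThmDmbC (α.circ.imp (α.imp (α.neg.imp β)))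
  | OK (α β : Form) : ThmDmbC ((α.imp β).obl.imp (α.obl.imp β.obl))
  | OE (α : Form) : ThmDmbC (α.bot.obl.imp α.bot)
  | mp {α β : Form} : ThmDmbC (α.imp β) → ThmDmbC α → ThmDmbC β
  | nec {α : Form} : ThmDmbC α → ThmDmbC α.obl

/-- conj γ [γ₂,…,γ_k] = γ ∧ γ₂ ∧ … ∧ γ_k -/
def conj (γ : Form) : List Form → Form
  | [] => γ
  | δ :: l => γ.and (conj δ l)

/-- Γ ⊢_DmbC φ iff ⊢ φ or ⊢ (γ₁ ∧ … ∧ γ_k) → φ for some γ₁,…,γ_k ∈ Γ, k ≥ 1. -/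
def DerivDmbC (Γ : Set Form) (φ : Form) : Prop :=
  ThmDmbC φ ∨ ∃ (γ : Form) (l : List Form),
    (∀ δ ∈ γ :: l, δ ∈ Γ) ∧ ThmDmbC ((conj γ l).imp φ)

/-- The three snapshots T = (1,0), t = (1,1), F = (0,1). -/
inductive SV : Type
  | T | t | F
deriving DecidableEq

/-- First coordinate of a snapshot. -/
def SV.p1 : SV → Bool
  | .T => true | .t => true | .F => false

/-- Second coordinate of a snapshot. -/
def SV.p2 : SV → Bool
  | .T => false | .t => true | .F => true

/-- Designated values: D = {T, t}, i.e. first coordinate is 1. -/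
def SV.desig (a : SV) : Prop := a.p1 = true

/-- Swap Kripke model conditions for DmbC on a serial frame (W,R) with
valuations v_w : Form → SV. -/
structure IsModelDmbC {W : Type} (R : W → W → Prop) (v : W → Form → SV) : Prop where
  serial : ∀ w, ∃ w', R w w'
  and_ : ∀ w α β, (v w (α.and β)).p1 = ((v w α).p1 && (v w β).p1)
  or_ : ∀ w α β, (v w (α.or β)).p1 = ((v w α).p1 || (v w β).p1)
  imp_ : ∀ w α β, (v w (α.imp β)).p1 = (!(v w α).p1 || (v w β).p1)
  neg_ : ∀ w α, (v w α.neg).p1 = (v w α).p2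
  circ_ : ∀ w α, (v w α.circ).p1 ≤ !((v w α).p1 && (v w α).p2)
  obl_ : ∀ w α, ((v w α.obl).p1 = true ↔ ∀ w', R w w' → (v w' α).p1 = true)

/-- Γ ⊨_DmbC φ : semantic consequence over all swap Kripke models for DmbC. -/
def SemDmbC (Γ : Set Form) (φ : Form) : Prop :=
  ∀ (W : Type) (R : W → W → Prop) (v : W → Form → SV), Nonempty W →
    IsModelDmbC R v → ∀ w : W, (∀ γ ∈ Γ, (v w γ).desig) → (v w φ).desig

/-- Δ is ψ-saturated in DmbC: Δ ⊬ ψ and Δ ∪ {φ} ⊢ ψ for every φ ∉ Δ. -/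
def Saturated (Δ : Set Form) (ψ : Form) : Prop :=
  ¬ DerivDmbC Δ ψ ∧ ∀ φ : Form, φ ∉ Δ → DerivDmbC (insert φ Δ) ψ

/-- The canonical worlds: the sets that are ψ-saturated in DmbC for some ψ. -/
def Wcan : Set (Set Form) := {Δ | ∃ ψ, Saturated Δ ψ}

/-- The canonical accessibility relation: Δ R_can Θ iff Den(Δ) ⊆ Θ. -/
def Rcan (Δ Θ : Set Form) : Prop := ∀ φ : Form, φ.obl ∈ Δ → φ ∈ Θ

section Dev
open ThmDmbC

/-- Iterated implication. -/
def impL : List Form → Form → Form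
  | [], φ => φ
  | a :: L, φ => a.imp (impL L φ)

lemma impL_append (L M : List Form) (φ : Form) :
    impL (L ++ M) φ = impL L (impL M φ) := by
  induction L with
  | nil => rfl
  | cons a L ih => simp [impL, ih]

lemma thm_trans {a b c : Form} (h1 : ThmDmbC (a.imp b)) (h2 : ThmDmbC (b.imp c)) :
    ThmDmbC (a.imp c) :=
  mp (mp (A2 a b c) (mp (A1 (b.imp c) a) h2)) h1

lemma thm_refl (a : Form) : ThmDmbC (a.imp a) :=
  mp (mp (A2 a (a.imp a) a) (A1 a (a.imp a))) (A1 a a)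

lemma thm_mono {c x y : Form} (h : ThmDmbC (x.imp y)) :
    ThmDmbC ((c.imp x).imp (c.imp y)) :=
  mp (A2 c x y) (mp (A1 (x.imp y) c) h)

lemma axL {φ : Form} (L : List Form) (h : ThmDmbC φ) : ThmDmbC (impL L φ) := by
  induction L with
  | nil => exact h
  | cons a L ih => exact mp (A1 (impL L φ) a) ih

lemma sL (L : List Form) (a b : Form) :
    ThmDmbC ((impL L (a.imp b)).imp ((impL L a).imp (impL L b))) := by
  induction L generalizing a b with
  | nil => exact thm_refl _
  | cons c L ih =>
      exact thm_trans (thm_mono (ih a b)) (A2 c (impL L a) (impL L b))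

lemma mpL {L : List Form} {a b : Form} (h1 : ThmDmbC (impL L (a.imp b)))
    (h2 : ThmDmbC (impL L a)) : ThmDmbC (impL L b) :=
  mp (mp (sL L a b) h1) h2

lemma hyp_head (φ : Form) (L : List Form) : ThmDmbC (φ.imp (impL L φ)) := by
  induction L with
  | nil => exact thm_refl φ
  | cons b L ih => exact thm_trans ih (A1 (impL L φ) b)

lemma hypL {φ : Form} {L : List Form} (h : φ ∈ L) : ThmDmbC (impL L φ) := by
  induction L with
  | nil => simp at h
  | cons a L ih =>
      rcases List.mem_cons.1 h with rfl | h
      · exact hyp_head φ L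
      · exact mp (A1 (impL L φ) a) (ih h)

lemma dAnd {x a b : Form} (h1 : ThmDmbC (x.imp a)) (h2 : ThmDmbC (x.imp b)) :
    ThmDmbC (x.imp (a.and b)) :=
  mpL (L := [x]) (mpL (L := [x]) (axL [x] (A3 a b)) h1) h2

lemma thm_swap (a b c : Form) :
    ThmDmbC ((a.imp (b.imp c)).imp (b.imp (a.imp c))) := by
  set L : List Form := [a.imp (b.imp c), b, a] with hL
  have h1 : ThmDmbC (impL L (a.imp (b.imp c))) := hypL (by simp [hL])
  have h2 : ThmDmbC (impL L a) := hypL (by simp [hL])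
  have h3 : ThmDmbC (impL L b) := hypL (by simp [hL])
  exact mpL (mpL h1 h2) h3

lemma thm_contr (a b : Form) :
    ThmDmbC ((a.imp (a.imp b)).imp (a.imp b)) := by
  set L : List Form := [a.imp (a.imp b), a] with hL
  have h1 : ThmDmbC (impL L (a.imp (a.imp b))) := hypL (by simp [hL])
  have h2 : ThmDmbC (impL L a) := hypL (by simp [hL])
  exact mpL (mpL h1 h2) h2

lemma conj_split (l : List Form) : ∀ (γ δ : Form) (m : List Form),
    ThmDmbC ((conj γ (l ++ δ :: m)).imp (conj γ l)) ∧
    ThmDmbC ((conj γ (l ++ δ :: m)).imp (conj δ m)) := by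
  induction l with
  | nil => exact fun γ δ m => ⟨A4 γ (conj δ m), A5 γ (conj δ m)⟩
  | cons ε l ih =>
      intro γ δ m
      refine ⟨dAnd (A4 _ _) (thm_trans (A5 _ _) (ih ε δ m).1),
        thm_trans (A5 _ _) (ih ε δ m).2⟩

lemma deriv_of_thm {Γ : Set Form} {φ : Form} (h : ThmDmbC φ) : DerivDmbC Γ φ :=
  Or.inl h

lemma deriv_of_mem {Γ : Set Form} {φ : Form} (h : φ ∈ Γ) : DerivDmbC Γ φ :=
  Or.inr ⟨φ, [], by simpa using h, thm_refl φ⟩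

lemma deriv_mono {Γ Γ' : Set Form} {φ : Form} (hs : Γ ⊆ Γ')
    (h : DerivDmbC Γ φ) : DerivDmbC Γ' φ := by
  rcases h with h | ⟨γ, l, hm, ht⟩
  · exact Or.inl h
  · exact Or.inr ⟨γ, l, fun δ hδ => hs (hm δ hδ), ht⟩

lemma deriv_mp {Γ : Set Form} {a b : Form} (h1 : DerivDmbC Γ (a.imp b))
    (h2 : DerivDmbC Γ a) : DerivDmbC Γ b := by
  rcases h1 with h1 | ⟨γ, l, hm, ht⟩
  · rcases h2 with h2 | ⟨γ', l', hm', ht'⟩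
    · exact Or.inl (mp h1 h2)
    · exact Or.inr ⟨γ', l', hm', thm_trans ht' h1⟩
  · rcases h2 with h2 | ⟨γ', l', hm', ht'⟩
    · exact Or.inr ⟨γ, l, hm,
        mpL (L := [conj γ l]) ht (axL [conj γ l] h2)⟩
    · refine Or.inr ⟨γ, l ++ γ' :: l', ?_, ?_⟩
      · intro δ hδ
        rcases List.mem_cons.1 hδ with rfl | hδ
        · exact hm δ (by simp)
        · rcases List.mem_append.1 hδ with hδ | hδ
          · exact hm δ (by simp [hδ])
          · exact hm' δ hδ
      · have hc1 := (conj_split l γ γ' l').1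
        have hc2 := (conj_split l γ γ' l').2
        set C := conj γ (l ++ γ' :: l')
        have k1 : ThmDmbC (impL [C] (a.imp b)) := thm_trans hc1 ht
        have k2 : ThmDmbC (impL [C] a) := thm_trans hc2 ht'
        exact mpL k1 k2

lemma ded_key (Δ : Set Form) (φ : Form) :
    ∀ (l : List Form) (γ χ : Form), (∀ δ ∈ γ :: l, δ ∈ insert φ Δ) →
    ThmDmbC ((conj γ l).imp χ) → DerivDmbC Δ (φ.imp χ) := by
  intro l
  induction l with
  | nil =>
      intro γ χ hm ht
      rcases hm γ (by simp) with rfl | hγ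
      · exact Or.inl ht
      · refine Or.inr ⟨γ, [], by simpa using hγ, ?_⟩
        exact thm_trans ht (A1 χ φ)
  | cons δ l ih =>
      intro γ χ hm ht
      set C := conj δ l with hC
      have ht' : ThmDmbC (C.imp (γ.imp χ)) := by
        have hand : ThmDmbC (impL [C, γ] (γ.and C)) :=
          mpL (mpL (axL [C, γ] (A3 γ C)) (hypL (by simp))) (hypL (by simp))
        exact mpL (axL [C, γ] ht) hand
      have hd : DerivDmbC Δ (φ.imp (γ.imp χ)) :=
        ih δ (γ.imp χ) (fun ε hε => hm ε (List.mem_cons_of_mem γ hε)) ht'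
      rcases hm γ (by simp) with rfl | hγ
      · exact deriv_mp (deriv_of_thm (thm_contr γ χ)) hd
      · have hd' : DerivDmbC Δ (γ.imp (φ.imp χ)) :=
          deriv_mp (deriv_of_thm (thm_swap φ γ χ)) hd
        exact deriv_mp hd' (deriv_of_mem hγ)

lemma deriv_deduction {Δ : Set Form} {φ ψ : Form}
    (h : DerivDmbC (insert φ Δ) ψ) : DerivDmbC Δ (φ.imp ψ) := by
  rcases h with h | ⟨γ, l, hm, ht⟩
  · exact Or.inl (mp (A1 ψ φ) h)
  · exact ded_key Δ φ l γ ψ hm ht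

lemma sat_closed {Δ : Set Form} {ψ : Form} (h : Saturated Δ ψ) {φ : Form}
    (hd : DerivDmbC Δ φ) : φ ∈ Δ := by
  by_contra hφ
  exact h.1 (deriv_mp (deriv_deduction (h.2 φ hφ)) hd)

lemma obl_conj {Δ : Set Form} :
    ∀ (l : List Form) (γ : Form), (∀ δ ∈ γ :: l, δ.obl ∈ Δ) →
    DerivDmbC Δ ((conj γ l).obl) := by
  intro l
  induction l with
  | nil => exact fun γ hm => deriv_of_mem (hm γ (by simp))
  | cons δ l ih =>
      intro γ hm
      set C := conj δ l with hC
      have hIH : DerivDmbC Δ C.obl :=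
        ih δ (fun ε hε => hm ε (List.mem_cons_of_mem γ hε))
      have t1 : ThmDmbC (γ.obl.imp ((C.imp (γ.and C)).obl)) :=
        mp (OK γ (C.imp (γ.and C))) (nec (A3 γ C))
      have t2 : ThmDmbC (γ.obl.imp (C.obl.imp (γ.and C).obl)) :=
        thm_trans t1 (OK C (γ.and C))
      exact deriv_mp (deriv_mp (deriv_of_thm t2)
        (deriv_of_mem (hm γ (by simp)))) hIH

/-- Encoding of formulas into ℕ. -/
def Form.code : Form → ℕ
  | .var n => Nat.pair 0 n
  | .and a b => Nat.pair 1 (Nat.pair a.code b.code)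
  | .or a b => Nat.pair 2 (Nat.pair a.code b.code)
  | .imp a b => Nat.pair 3 (Nat.pair a.code b.code)
  | .neg a => Nat.pair 4 a.code
  | .circ a => Nat.pair 5 a.code
  | .obl a => Nat.pair 6 a.code

lemma Form.code_injective : Function.Injective Form.code := by
  intro a
  induction a with
  | var n =>
      intro b hb; cases b <;> simp [Form.code, Nat.pair_eq_pair] at hb
      rw [hb]
  | and x y ihx ihy =>
      intro b hb; cases b <;> simp [Form.code, Nat.pair_eq_pair] at hb
      rw [ihx hb.1, ihy hb.2]
  | or x y ihx ihy =>
      intro b hb; cases b <;> simp [Form.code, Nat.pair_eq_pair] at hb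
      rw [ihx hb.1, ihy hb.2]
  | imp x y ihx ihy =>
      intro b hb; cases b <;> simp [Form.code, Nat.pair_eq_pair] at hb
      rw [ihx hb.1, ihy hb.2]
  | neg x ihx =>
      intro b hb; cases b <;> simp [Form.code, Nat.pair_eq_pair] at hb
      rw [ihx hb]
  | circ x ihx =>
      intro b hb; cases b <;> simp [Form.code, Nat.pair_eq_pair] at hb
      rw [ihx hb]
  | obl x ihx =>
      intro b hb; cases b <;> simp [Form.code, Nat.pair_eq_pair] at hb
      rw [ihx hb]

instance : Countable Form := ⟨⟨Form.code, Form.code_injective⟩⟩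
instance : Nonempty Form := ⟨Form.var 0⟩

open Classical in
/-- Lindenbaum chain extending Γ0 while avoiding derivability of α. -/
noncomputable def lchain (e : ℕ → Form) (Γ0 : Set Form) (α : Form) : ℕ → Set Form
  | 0 => Γ0
  | n + 1 =>
      if DerivDmbC (insert (e n) (lchain e Γ0 α n)) α then lchain e Γ0 α n
      else insert (e n) (lchain e Γ0 α n)

lemma lchain_mono (e : ℕ → Form) (Γ0 : Set Form) (α : Form) :
    ∀ {n m : ℕ}, n ≤ m → lchain e Γ0 α n ⊆ lchain e Γ0 α m := by
  intro n m hnm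
  induction m with
  | zero => rw [Nat.le_zero.1 hnm]
  | succ m ih =>
      rcases Nat.le_succ_iff.1 hnm with h | rfl
      · refine subset_trans (ih h) ?_
        simp only [lchain]
        split
        · exact subset_rfl
        · exact Set.subset_insert _ _
      · exact subset_rfl

lemma lchain_notderiv (e : ℕ → Form) (Γ0 : Set Form) (α : Form)
    (h0 : ¬ DerivDmbC Γ0 α) : ∀ n, ¬ DerivDmbC (lchain e Γ0 α n) α := by
  intro n
  induction n with
  | zero => exact h0
  | succ n ih =>
      simp only [lchain]
      split
      · exact ih
      · next h => exact h

lemma lchain_list (e : ℕ → Form) (Γ0 : Set Form) (α : Form) :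
    ∀ (L : List Form), (∀ δ ∈ L, δ ∈ ⋃ n, lchain e Γ0 α n) →
    ∃ N, ∀ δ ∈ L, δ ∈ lchain e Γ0 α N := by
  intro L
  induction L with
  | nil => exact fun _ => ⟨0, by simp⟩
  | cons a L ih =>
      intro hm
      obtain ⟨n, hn⟩ := Set.mem_iUnion.1 (hm a (by simp))
      obtain ⟨N, hN⟩ := ih (fun δ hδ => hm δ (List.mem_cons_of_mem a hδ))
      refine ⟨max n N, ?_⟩
      intro δ hδ
      rcases List.mem_cons.1 hδ with rfl | hδ
      · exact lchain_mono e Γ0 α (le_max_left n N) hn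
      · exact lchain_mono e Γ0 α (le_max_right n N) (hN δ hδ)

lemma lunion_notderiv (e : ℕ → Form) (Γ0 : Set Form) (α : Form)
    (h0 : ¬ DerivDmbC Γ0 α) : ¬ DerivDmbC (⋃ n, lchain e Γ0 α n) α := by
  rintro (h | ⟨γ, l, hm, ht⟩)
  · exact h0 (Or.inl h)
  · obtain ⟨N, hN⟩ := lchain_list e Γ0 α (γ :: l) hm
    exact lchain_notderiv e Γ0 α h0 N (Or.inr ⟨γ, l, hN, ht⟩)

lemma lunion_saturated (e : ℕ → Form) (he : Function.Surjective e)
    (Γ0 : Set Form) (α : Form) (h0 : ¬ DerivDmbC Γ0 α) :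
    Saturated (⋃ n, lchain e Γ0 α n) α := by
  refine ⟨lunion_notderiv e Γ0 α h0, ?_⟩
  intro φ hφ
  obtain ⟨n, rfl⟩ := he φ
  have hφn : e n ∉ lchain e Γ0 α (n + 1) := fun hc =>
    hφ (Set.mem_iUnion.2 ⟨n + 1, hc⟩)
  have hder : DerivDmbC (insert (e n) (lchain e Γ0 α n)) α := by
    by_contra hc
    exact hφn (by simp only [lchain]; rw [if_neg hc]; exact Set.mem_insert _ _)
  refine deriv_mono ?_ hder
  exact Set.insert_subset_insert (fun x hx => Set.mem_iUnion.2 ⟨n, hx⟩)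

end Dev

/-- Properties of ψ-saturated sets in DmbC. -/
theorem saturated_properties (Δ : Set Form) (ψ : Form) (h : Saturated Δ ψ) :
    ∀ α β : Form,
      (α.and β ∈ Δ ↔ α ∈ Δ ∧ β ∈ Δ) ∧
      (α.or β ∈ Δ ↔ α ∈ Δ ∨ β ∈ Δ) ∧
      (α.imp β ∈ Δ ↔ α ∉ Δ ∨ β ∈ Δ) ∧
      (α.neg ∉ Δ → α ∈ Δ) ∧
      (α ∈ Δ → α.neg ∈ Δ → α.circ ∉ Δ) ∧
      (α.obl ∈ Δ ↔ ∀ Θ ∈ Wcan, Rcan Δ Θ → α ∈ Θ) := by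
  intro α β
  refine ⟨?_, ?_, ?_, ?_, ?_, ?_⟩
  · -- and
    constructor
    · intro hab
      exact ⟨sat_closed h (deriv_mp (deriv_of_thm (ThmDmbC.A4 α β)) (deriv_of_mem hab)),
        sat_closed h (deriv_mp (deriv_of_thm (ThmDmbC.A5 α β)) (deriv_of_mem hab))⟩
    · rintro ⟨ha, hb⟩
      exact sat_closed h (deriv_mp (deriv_mp (deriv_of_thm (ThmDmbC.A3 α β))
        (deriv_of_mem ha)) (deriv_of_mem hb))
  · -- or
    constructor
    · intro hor
      by_contra hc
      push_neg at hc
      have h1 : DerivDmbC Δ (α.imp ψ) := deriv_deduction (h.2 α hc.1)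
      have h2 : DerivDmbC Δ (β.imp ψ) := deriv_deduction (h.2 β hc.2)
      exact h.1 (deriv_mp (deriv_mp (deriv_mp
        (deriv_of_thm (ThmDmbC.A8 α β ψ)) h1) h2) (deriv_of_mem hor))
    · rintro (ha | hb)
      · exact sat_closed h (deriv_mp (deriv_of_thm (ThmDmbC.A6 α β)) (deriv_of_mem ha))
      · exact sat_closed h (deriv_mp (deriv_of_thm (ThmDmbC.A7 α β)) (deriv_of_mem hb))
  · -- imp
    constructor
    · intro himp
      by_cases hα : α ∈ Δ
      · exact Or.inr (sat_closed h (deriv_mp (deriv_of_mem himp) (deriv_of_mem hα)))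
      · exact Or.inl hα
    · rintro (hα | hβ)
      · by_contra himp
        have h1 : DerivDmbC Δ ((α.imp β).imp ψ) := deriv_deduction (h.2 _ himp)
        have h2 : DerivDmbC Δ (α.imp ψ) := deriv_deduction (h.2 α hα)
        -- the Peirce tautology ((α→β)→ψ) → ((α→ψ) → ψ)
        have thmF : ThmDmbC (((α.imp β).imp ψ).imp ((α.imp ψ).imp ψ)) := by
          set L : List Form := [(α.imp β).imp ψ, α.imp ψ] with hL
          have k0 : ThmDmbC (impL (L ++ [ψ.imp β] ++ [α]) β) := by
            have t1 : ThmDmbC (impL (L ++ [ψ.imp β] ++ [α]) (ψ.imp β)) :=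
              hypL (by simp [hL])
            have t2 : ThmDmbC (impL (L ++ [ψ.imp β] ++ [α]) (α.imp ψ)) :=
              hypL (by simp [hL])
            have t3 : ThmDmbC (impL (L ++ [ψ.imp β] ++ [α]) α) :=
              hypL (by simp)
            exact mpL t1 (mpL t2 t3)
          rw [impL_append, impL_append] at k0
          have k1 : ThmDmbC (impL (L ++ [ψ.imp β]) (α.imp β)) := by
            rw [impL_append]; exact k0
          have k2 : ThmDmbC (impL (L ++ [ψ.imp β]) ψ) :=
            mpL (hypL (by simp [hL])) k1
          rw [impL_append] at k2
          exact mpL (axL L (ThmDmbC.A9 ψ β)) k2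
        exact h.1 (deriv_mp (deriv_mp (deriv_of_thm thmF) h1) h2)
      · exact sat_closed h (deriv_mp (deriv_of_thm (ThmDmbC.A1 β α)) (deriv_of_mem hβ))
  · -- neg
    intro hneg
    by_contra hα
    have h1 : DerivDmbC Δ (α.imp ψ) := deriv_deduction (h.2 α hα)
    have h2 : DerivDmbC Δ (α.neg.imp ψ) := deriv_deduction (h.2 _ hneg)
    exact h.1 (deriv_mp (deriv_mp (deriv_mp
      (deriv_of_thm (ThmDmbC.A8 α α.neg ψ)) h1) h2) (deriv_of_thm (ThmDmbC.EM α)))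
  · -- circ
    intro ha hn hc
    exact h.1 (deriv_mp (deriv_mp (deriv_mp
      (deriv_of_thm (ThmDmbC.bc α ψ)) (deriv_of_mem hc)) (deriv_of_mem ha))
      (deriv_of_mem hn))
  · -- obl
    constructor
    · intro hobl Θ _ hR
      exact hR α hobl
    · intro hall
      by_contra hOα
      -- Den(Δ) does not derive α
      set Den : Set Form := {φ | φ.obl ∈ Δ} with hDen
      have h0 : ¬ DerivDmbC Den α := by
        rintro (hα | ⟨γ, l, hm, ht⟩)
        · exact hOα (sat_closed h (deriv_of_thm (ThmDmbC.nec hα)))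
        · have hobl : DerivDmbC Δ ((conj γ l).obl) :=
            obl_conj l γ (fun δ hδ => hm δ hδ)
          have hthm : ThmDmbC ((conj γ l).obl.imp α.obl) :=
            ThmDmbC.mp (ThmDmbC.OK (conj γ l) α) (ThmDmbC.nec ht)
          exact hOα (sat_closed h (deriv_mp (deriv_of_thm hthm) hobl))
      obtain ⟨e, he⟩ := exists_surjective_nat Form
      have hsat := lunion_saturated e he Den α h0
      have hmem : (⋃ n, lchain e Den α n) ∈ Wcan := ⟨α, hsat⟩
      have hRcan : Rcan Δ (⋃ n, lchain e Den α n) := by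
        intro φ hφ
        exact Set.mem_iUnion.2 ⟨0, hφ⟩
      have hαin := hall _ hmem hRcan
      exact lunion_notderiv e Den α h0 (deriv_of_mem hαin)
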